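/- For every a > 0 and b > 0, ∫₀^∞ log(x) · (b^a · x^{a−1} · exp(−b x) / Γ(a)) dx = Γ′(a)/Γ(a) − log b, where Γ′ denotes the derivative of the real Gamma function. (The expectation of log of a Gamma(a, b) random variable is the digamma function at a minus log b.) -/

import Mathlib

open Real MeasureTheory Set Filter Asymptotics
open scoped Topology

set_option maxHeartbeats 1000000

lemma gamma_log_aux (a : ℝ) (ha : 0 < a) :
    MeasureTheory.IntegrableOn (fun t : ℝ => Real.log t * (Real.exp (-t) * t ^ (a - 1)))
        (Set.Ioi 0) ∧
      HasDerivAt Real.Gamma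
        (∫ t in Set.Ioi 0, Real.log t * (Real.exp (-t) * t ^ (a - 1))) a := by
  have ha' : (0 : ℝ) < (a : ℂ).re := by simpa using ha
  have h := mellin_hasDerivAt_of_isBigO_rpow (E := ℂ)
      (f := fun x : ℝ => ((Real.exp (-x)) : ℂ)) (s := (a : ℂ)) ?_ ?_ (lt_add_one _) ?_ ha'
  rotate_left
  · refine (Continuous.continuousOn ?_).locallyIntegrableOn measurableSet_Ioi
    exact Complex.continuous_ofReal.comp (Real.continuous_exp.comp continuous_neg)
  · rw [← isBigO_norm_left]
    simp_rw [Complex.norm_real, isBigO_norm_left]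
    simpa only [neg_one_mul] using (isLittleO_exp_neg_mul_rpow_atTop zero_lt_one _).isBigO
  · simp_rw [neg_zero, Real.rpow_zero]
    refine isBigO_const_of_tendsto (?_ : Tendsto _ _ (𝓝 (1 : ℂ))) one_ne_zero
    rw [(by simp : (1 : ℂ) = Real.exp (-0))]
    exact (Complex.continuous_ofReal.comp
      (Real.continuous_exp.comp continuous_neg)).continuousWithinAt
  have key : EqOn (fun t : ℝ => (t : ℂ) ^ ((a : ℂ) - 1) • (Real.log t • ((Real.exp (-t)) : ℂ)))
      (fun t : ℝ => ((Real.log t * (Real.exp (-t) * t ^ (a - 1)) : ℝ) : ℂ)) (Ioi 0) := by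
    intro t ht
    have ht' : (0 : ℝ) < t := ht
    simp only [smul_eq_mul, Complex.real_smul]
    rw [show ((a : ℂ) - 1) = ((a - 1 : ℝ) : ℂ) by push_cast; ring,
      ← Complex.ofReal_cpow ht'.le]
    push_cast
    ring
  obtain ⟨hconv, hder⟩ := h
  rw [MellinConvergent] at hconv
  constructor
  · have h1 : IntegrableOn
        (fun t : ℝ => ((Real.log t * (Real.exp (-t) * t ^ (a - 1)) : ℝ) : ℂ)) (Ioi 0) :=
      hconv.congr_fun key measurableSet_Ioi
    have h1' := h1.re
    simp only [RCLike.re_to_complex, Complex.ofReal_re] at h1'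
    exact h1'
  · have hD : (mellin (fun t : ℝ => Real.log t • ((Real.exp (-t)) : ℂ)) (a : ℂ)) =
        ((∫ t in Set.Ioi 0, Real.log t * (Real.exp (-t) * t ^ (a - 1)) : ℝ) : ℂ) := by
      rw [mellin, setIntegral_congr_fun measurableSet_Ioi key]
      exact integral_ofReal
    have h2 : HasDerivAt Complex.Gamma
        (((∫ t in Set.Ioi 0, Real.log t * (Real.exp (-t) * t ^ (a - 1)) : ℝ) : ℂ)) (a : ℂ) := by
      rw [← hD]
      have h3 : HasDerivAt Complex.GammaIntegral
          (mellin (fun t : ℝ => Real.log t • ((Real.exp (-t)) : ℂ)) (a : ℂ)) (a : ℂ) := by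
        rw [Complex.GammaIntegral_eq_mellin]
        exact hder
      refine h3.congr_of_eventuallyEq ?_
      have hopen : IsOpen {z : ℂ | 0 < z.re} := isOpen_lt continuous_const Complex.continuous_re
      filter_upwards [hopen.mem_nhds ha'] with z hz
      exact Complex.Gamma_eq_integral hz
    have h4 := h2.real_of_complex
    have h5 : (fun x : ℝ => (Complex.Gamma x).re) = Real.Gamma := by
      funext x; rw [Complex.Gamma_ofReal, Complex.ofReal_re]
    simpa [h5, Complex.ofReal_re] using h4

/-- The expectation of the logarithm of a Gamma(a, b) random variable is the digamma
function at `a` minus `log b`. -/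
theorem gamma_expectation_log (a b : ℝ) (ha : 0 < a) (hb : 0 < b) :
    ∫ x in Set.Ioi (0 : ℝ),
        Real.log x * (b ^ a * x ^ (a - 1) * Real.exp (-(b * x)) / Real.Gamma a) =
      deriv Real.Gamma a / Real.Gamma a - Real.log b := by
  obtain ⟨hint, hderiv⟩ := gamma_log_aux a ha
  have hΓ : (0 : ℝ) < Real.Gamma a := Real.Gamma_pos_of_pos ha
  set g : ℝ → ℝ := fun t => (Real.log t - Real.log b) * (Real.exp (-t) * t ^ (a - 1)) with hg
  have step1 : ∫ x in Set.Ioi (0 : ℝ),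
      Real.log x * (b ^ a * x ^ (a - 1) * Real.exp (-(b * x)) / Real.Gamma a) =
      ∫ x in Set.Ioi (0 : ℝ), (b / Real.Gamma a) * g (b * x) := by
    refine setIntegral_congr_fun measurableSet_Ioi fun x hx => ?_
    have hx' : (0 : ℝ) < x := hx
    simp only [hg]
    rw [Real.log_mul hb.ne' hx'.ne', Real.mul_rpow hb.le hx'.le]
    rw [show b ^ a = b ^ (a - 1) * b from by
      rw [← Real.rpow_add_one hb.ne' (a - 1), sub_add_cancel]]
    ring
  rw [step1, MeasureTheory.integral_const_mul,
    MeasureTheory.integral_comp_mul_left_Ioi g 0 hb, mul_zero]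
  have hgsplit : ∫ t in Set.Ioi (0 : ℝ), g t =
      deriv Real.Gamma a - Real.log b * Real.Gamma a := by
    have hint2 : MeasureTheory.IntegrableOn
        (fun t : ℝ => Real.log b * (Real.exp (-t) * t ^ (a - 1))) (Set.Ioi 0) :=
      (Real.GammaIntegral_convergent ha).const_mul _
    have : ∫ t in Set.Ioi (0 : ℝ), g t =
        (∫ t in Set.Ioi (0 : ℝ), Real.log t * (Real.exp (-t) * t ^ (a - 1))) -
        ∫ t in Set.Ioi (0 : ℝ), Real.log b * (Real.exp (-t) * t ^ (a - 1)) := by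
      rw [← MeasureTheory.integral_sub hint hint2]
      refine setIntegral_congr_fun measurableSet_Ioi fun t ht => ?_
      simp only [hg]; ring
    rw [this, hderiv.deriv, MeasureTheory.integral_const_mul,
      ← Real.Gamma_eq_integral ha]
  rw [hgsplit]
  simp only [smul_eq_mul]
  field_simp [hb.ne']
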